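/- For a finite-dimensional Lie ∞-algebra E, the modular function of the graded Lie algebra H•(E, l₁) agrees with the modular function of E on degree −1 cocycles: ω_{H(E,l₁)}([x]) = ω_E(x) for all x ∈ E_{−1} with l₁(x) = 0. -/

import Mathlib

open scoped BigOperators

noncomputable section

/-- The Koszul sign of a permutation `σ` acting on homogeneous elements whose
degrees are given by `d`. -/
def koszulSign (K : Type*) [Field K] {n : ℕ} (σ : Equiv.Perm (Fin n)) (d : Fin n → ℤ) : K :=
  ∏ p ∈ Finset.univ.filter (fun p : Fin n × Fin n => p.1 < p.2 ∧ σ p.2 < σ p.1),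
    (-1 : K) ^ (d (σ p.1) * d (σ p.2))

/-- `σ` is an `(i, n-i)`-unshuffle. -/
def IsUnshuffle {n : ℕ} (i : ℕ) (σ : Equiv.Perm (Fin n)) : Prop :=
  (∀ a b : Fin n, a < b → (b : ℕ) < i → σ a < σ b) ∧
  (∀ a b : Fin n, a < b → i ≤ (a : ℕ) → σ a < σ b)

instance {n : ℕ} (i : ℕ) (σ : Equiv.Perm (Fin n)) : Decidable (IsUnshuffle i σ) := by
  unfold IsUnshuffle; infer_instance

/-- The nested term `Φ_{n-i+1}(l_{i}(x_{σ(1)},…,x_{σ(i)}), x_{σ(i+1)},…,x_{σ(n)})`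
appearing in the generalized Jacobi identities (here the arity of the inner bracket
is `i.1 + 1`). -/
def nestedTerm {K : Type*} [Field K] {E W : Type*} [AddCommGroup E] [Module K E]
    [AddCommGroup W] [Module K W]
    (l : ∀ n : ℕ, MultilinearMap K (fun _ : Fin n => E) E)
    (Φ : ∀ n : ℕ, MultilinearMap K (fun _ : Fin n => E) W)
    (n : ℕ) (i : Fin n) (σ : Equiv.Perm (Fin n)) (x : Fin n → E) : W :=
  Φ ((n - (i.1 + 1)) + 1)
    (Fin.cons (l (i.1 + 1) (fun a => x (σ (Fin.castLE i.isLt a))))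
      (fun a : Fin (n - (i.1 + 1)) =>
        x (σ ⟨(i.1 + 1) + a.1, by have := a.isLt; have := i.isLt; omega⟩)))

/-- A symmetric Lie `∞`-algebra structure on a `ℤ`-graded vector space, the grading
being given by an (internal) family of subspaces `𝒜`: a family of
graded-symmetric multilinear brackets of degree `+1` satisfying the generalized
Jacobi identities. -/
structure GradedLieInfty (K : Type*) [Field K] (E : Type*) [AddCommGroup E] [Module K E]
    (𝒜 : ℤ → Submodule K E) where
  l : ∀ n : ℕ, MultilinearMap K (fun _ : Fin n => E) E
  deg : ∀ (n : ℕ), 1 ≤ n → ∀ (d : Fin n → ℤ) (x : Fin n → E),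
    (∀ a, x a ∈ 𝒜 (d a)) → l n x ∈ 𝒜 ((∑ a, d a) + 1)
  symm : ∀ (n : ℕ), 1 ≤ n → ∀ (σ : Equiv.Perm (Fin n)) (d : Fin n → ℤ) (x : Fin n → E),
    (∀ a, x a ∈ 𝒜 (d a)) → l n (fun a => x (σ a)) = koszulSign K σ d • l n x
  jacobi : ∀ (n : ℕ), 1 ≤ n → ∀ (d : Fin n → ℤ) (x : Fin n → E),
    (∀ a, x a ∈ 𝒜 (d a)) →
    ∑ i : Fin n,
      ∑ σ ∈ Finset.univ.filter (fun σ : Equiv.Perm (Fin n) => IsUnshuffle (i.1 + 1) σ),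
        koszulSign K σ d • nestedTerm l l n i σ x = 0

/-- The degree-`0` block of an endomorphism of a graded vector space. -/
def gradedPiece {K : Type*} [Field K] {E : Type*} [AddCommGroup E] [Module K E]
    (𝒜 : ℤ → Submodule K E) [DirectSum.Decomposition 𝒜] (f : E →ₗ[K] E) (i : ℤ) :
    𝒜 i →ₗ[K] 𝒜 i :=
  (DirectSum.component K ℤ (fun j => 𝒜 j) i).comp
    ((DirectSum.decomposeLinearEquiv 𝒜).toLinearMap.comp (f.comp (𝒜 i).subtype))

/-- The supertrace of an endomorphism of a graded vector space: the alternating sum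
of the traces of its diagonal blocks. -/
def str (K : Type*) [Field K] {E : Type*} [AddCommGroup E] [Module K E]
    (𝒜 : ℤ → Submodule K E) [DirectSum.Decomposition 𝒜] (f : E →ₗ[K] E) : K :=
  ∑ᶠ i : ℤ, (-1 : K) ^ i * LinearMap.trace K (𝒜 i) (gradedPiece 𝒜 f i)


section AuxA
open LinearMap

section AuxTrace
variable {K : Type*} [Field K]

lemma auxTrace_zero_of_subsingleton {V : Type*} [AddCommGroup V] [Module K V] [Subsingleton V]
    (f : V →ₗ[K] V) : LinearMap.trace K V f = 0 := by
  rw [Subsingleton.elim f 0, map_zero]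

lemma auxTrace_eq_of_intertwine {V W : Type*} [AddCommGroup V] [Module K V]
    [AddCommGroup W] [Module K W] (e : V ≃ₗ[K] W) (f : V →ₗ[K] V) (g : W →ₗ[K] W)
    (h : ∀ v, e (f v) = g (e v)) :
    LinearMap.trace K V f = LinearMap.trace K W g := by
  rw [← LinearMap.trace_conj' f e]
  congr 1
  ext w
  rw [LinearEquiv.conj_apply]
  simp only [LinearMap.coe_comp, Function.comp_apply, LinearEquiv.coe_coe]
  rw [h (e.symm w), e.apply_symm_apply]

lemma auxTrace_restrict_add_mapQ {V : Type*} [AddCommGroup V] [Module K V]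
    [FiniteDimensional K V] (p : Submodule K V) (f : V →ₗ[K] V)
    (hf : ∀ v ∈ p, f v ∈ p) :
    LinearMap.trace K V f =
      LinearMap.trace K p (f.restrict hf) +
        LinearMap.trace K (V ⧸ p) (p.mapQ p f hf) := by
  obtain ⟨q, hq⟩ := Submodule.exists_isCompl p
  set π1 := Submodule.linearProjOfIsCompl p q hq with hπ1
  set π2 := Submodule.linearProjOfIsCompl q p hq.symm with hπ2
  have hid : f = f ∘ₗ (p.subtype ∘ₗ π1) + f ∘ₗ (q.subtype ∘ₗ π2) := by
    ext v
    simp only [LinearMap.add_apply, LinearMap.coe_comp, Function.comp_apply,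
      Submodule.coe_subtype, ← map_add]
    rw [show ((π1 v : V) + π2 v) = v from Submodule.projection_add_projection_eq_self hq v]
  have h1 : LinearMap.trace K V (f ∘ₗ (p.subtype ∘ₗ π1)) =
      LinearMap.trace K p (f.restrict hf) := by
    rw [← LinearMap.comp_assoc, LinearMap.trace_comp_comm']
    congr 1
    ext v
    have : f ↑v ∈ p := hf _ v.2
    simp only [LinearMap.coe_comp, Function.comp_apply, Submodule.coe_subtype]
    have h2 : π1 (f ↑v) = ⟨f ↑v, this⟩ := Submodule.linearProjOfIsCompl_apply_left hq ⟨f ↑v, this⟩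
    rw [h2]
    rfl
  have h2 : LinearMap.trace K V (f ∘ₗ (q.subtype ∘ₗ π2)) =
      LinearMap.trace K (V ⧸ p) (p.mapQ p f hf) := by
    rw [← LinearMap.comp_assoc, LinearMap.trace_comp_comm']
    refine auxTrace_eq_of_intertwine (Submodule.quotientEquivOfIsCompl p q hq).symm _ _ ?_
    intro z
    rw [Submodule.quotientEquivOfIsCompl_symm_apply, Submodule.quotientEquivOfIsCompl_symm_apply]
    simp only [LinearMap.coe_comp, Function.comp_apply, Submodule.coe_subtype]
    rw [Submodule.mapQ_apply]
    rw [Submodule.Quotient.eq]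
    have hsum : (π1 (f ↑z) : V) + π2 (f ↑z) = f ↑z :=
      Submodule.projection_add_projection_eq_self hq (f ↑z)
    set a := π1 (f ↑z) with ha
    set b := π2 (f ↑z) with hb
    have : (b : V) - f ↑z = -(a : V) := by rw [← hsum]; abel
    rw [this]
    exact neg_mem a.2
  conv_lhs => rw [hid]
  rw [map_add, h1, h2]

lemma auxTrace_eq_restrict_add_of_surjective {V W : Type*} [AddCommGroup V] [Module K V]
    [AddCommGroup W] [Module K W] [FiniteDimensional K V]
    (f : V →ₗ[K] V) (g : W →ₗ[K] W) (π : V →ₗ[K] W) (hπ : Function.Surjective π)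
    (hf : ∀ v ∈ LinearMap.ker π, f v ∈ LinearMap.ker π)
    (hcomm : ∀ v, π (f v) = g (π v)) :
    LinearMap.trace K V f =
      LinearMap.trace K (LinearMap.ker π) (f.restrict hf) + LinearMap.trace K W g := by
  rw [auxTrace_restrict_add_mapQ (LinearMap.ker π) f hf]
  congr 1
  set e0 := (LinearMap.ker π).liftQ π le_rfl with he0
  have hinj : Function.Injective e0 := by
    rw [← LinearMap.ker_eq_bot]
    exact Submodule.ker_liftQ_eq_bot _ _ _ le_rfl
  have hsurj : Function.Surjective e0 := by
    intro w
    obtain ⟨v, rfl⟩ := hπ w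
    exact ⟨Submodule.Quotient.mk v, Submodule.liftQ_apply _ _ _⟩
  refine auxTrace_eq_of_intertwine (LinearEquiv.ofBijective e0 ⟨hinj, hsurj⟩) _ g ?_
  intro z
  obtain ⟨v, rfl⟩ := Submodule.Quotient.mk_surjective _ z
  show e0 (Submodule.mapQ _ _ f _ (Submodule.Quotient.mk v)) = g (e0 (Submodule.Quotient.mk v))
  rw [Submodule.mapQ_apply, he0, Submodule.liftQ_apply, Submodule.liftQ_apply, hcomm]

end AuxTrace


lemma gradedPiece_eq_restrict {K : Type*} [Field K] {E : Type*} [AddCommGroup E] [Module K E]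
    (𝒜 : ℤ → Submodule K E) [DirectSum.Decomposition 𝒜] (f : E →ₗ[K] E) (i : ℤ)
    (hf : ∀ v ∈ 𝒜 i, f v ∈ 𝒜 i) :
    gradedPiece 𝒜 f i = f.restrict hf := by
  ext v
  have h : ((DirectSum.decompose 𝒜 (f ↑v)) i : E) = f ↑v :=
    DirectSum.decompose_of_mem_same 𝒜 (hf ↑v v.2)
  show ((DirectSum.component K ℤ (fun j => (𝒜 j : Submodule K E)) i)
      ((DirectSum.decomposeLinearEquiv 𝒜) (f ↑v)) : E) = f ↑v
  rw [DirectSum.decomposeLinearEquiv_apply]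
  exact h

-- decomposition: d z lands in 𝒜 (i+1) pieces
lemma d_decompose_eq {K : Type*} [Field K] {E : Type*} [AddCommGroup E] [Module K E]
    (𝒜 : ℤ → Submodule K E) [DirectSum.Decomposition 𝒜] (d : E →ₗ[K] E)
    (hddeg : ∀ i : ℤ, ∀ v ∈ 𝒜 i, d v ∈ 𝒜 (i + 1)) (i : ℤ) (z : E)
    (hz : d z ∈ 𝒜 (i + 1)) :
    d ((DirectSum.decompose 𝒜 z i : E)) = d z := by
  classical
  have hz2 := DirectSum.sum_support_decompose 𝒜 z
  set s := (DirectSum.decompose 𝒜 z).support with hs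
  -- The linear map extracting the (i+1)-component
  set D1 : E →ₗ[K] E := (𝒜 (i+1)).subtype ∘ₗ ((DirectSum.component K ℤ (fun j => 𝒜 j) (i+1)).comp
    (DirectSum.decomposeLinearEquiv 𝒜).toLinearMap) with hD1
  have hD1' : ∀ w : E, D1 w = ((DirectSum.decompose 𝒜 w) (i+1) : E) := by
    intro w
    simp only [hD1, LinearMap.coe_comp, Function.comp_apply, LinearEquiv.coe_coe,
      DirectSum.decomposeLinearEquiv_apply, Submodule.coe_subtype]
    rfl
  have e1 : D1 (d z) = d z := by rw [hD1']; exact DirectSum.decompose_of_mem_same 𝒜 hz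
  have e2 : d z = ∑ j ∈ s, d ((DirectSum.decompose 𝒜 z j : E)) := by
    conv_lhs => rw [← hz2]
    rw [map_sum]
  have e3 : D1 (d z) = ∑ j ∈ s, D1 (d ((DirectSum.decompose 𝒜 z j : E))) := by
    conv_lhs => rw [e2]
    rw [map_sum]
  have e4 : ∀ j ∈ s, j ≠ i → D1 (d ((DirectSum.decompose 𝒜 z j : E))) = 0 := by
    intro j _ hji
    rw [hD1']
    exact DirectSum.decompose_of_mem_ne 𝒜 (hddeg j _ (SetLike.coe_mem _)) (by omega)
  by_cases hi : i ∈ s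
  · have h5 : d ((DirectSum.decompose 𝒜 z i : E)) = D1 (d ((DirectSum.decompose 𝒜 z i : E))) := by
      rw [hD1']
      exact (DirectSum.decompose_of_mem_same 𝒜 (hddeg i _ (SetLike.coe_mem _))).symm
    rw [h5, ← Finset.sum_eq_single_of_mem i hi e4, ← e3, e1]
  · have hzi : ((DirectSum.decompose 𝒜 z) i : E) = 0 := by
      rw [DFinsupp.notMem_support_iff.mp hi]; rfl
    have : D1 (d z) = 0 := by
      rw [e3]
      refine Finset.sum_eq_zero fun j hj => e4 j hj (fun h => hi (h ▸ hj))
    rw [e1] at this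
    rw [hzi, map_zero, this]


lemma aux_subsingleton_of_eq_bot {K : Type*} [Field K] {E : Type*} [AddCommGroup E] [Module K E]
    (p : Submodule K E) (hp : p = ⊥) : Subsingleton ↥p := by
  subst hp
  exact ⟨fun a b => Subtype.ext (by rw [(Submodule.mem_bot K).mp a.2, (Submodule.mem_bot K).mp b.2])⟩

set_option maxHeartbeats 1000000 in
set_option synthInstance.maxHeartbeats 1000000 in
lemma str_eq_of_chainMap {K : Type*} [Field K] {E : Type*} [AddCommGroup E] [Module K E]
    [FiniteDimensional K E]
    (𝒜 : ℤ → Submodule K E) [DirectSum.Decomposition 𝒜]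
    (d f : E →ₗ[K] E)
    (hd2 : ∀ v, d (d v) = 0)
    (hddeg : ∀ i : ℤ, ∀ v ∈ 𝒜 i, d v ∈ 𝒜 (i + 1))
    (hfdeg : ∀ i : ℤ, ∀ v ∈ 𝒜 i, f v ∈ 𝒜 i)
    (hcomm : ∀ v, d (f v) = f (d v))
    (𝒜H : ℤ → Submodule K
      ((LinearMap.ker d) ⧸ ((LinearMap.range d).comap (LinearMap.ker d).subtype)))
    (h𝒜H : ∀ i : ℤ, 𝒜H i = (((𝒜 i ⊓ LinearMap.ker d).comap (LinearMap.ker d).subtype).map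
        ((LinearMap.range d).comap (LinearMap.ker d).subtype).mkQ))
    [DirectSum.Decomposition 𝒜H]
    (β : ((LinearMap.ker d) ⧸ ((LinearMap.range d).comap (LinearMap.ker d).subtype)) →ₗ[K]
      ((LinearMap.ker d) ⧸ ((LinearMap.range d).comap (LinearMap.ker d).subtype)))
    (hβ : ∀ (y : E) (hy : y ∈ LinearMap.ker d) (hy' : f y ∈ LinearMap.ker d),
      β (Submodule.Quotient.mk ⟨y, hy⟩) = Submodule.Quotient.mk ⟨f y, hy'⟩) :
    str K 𝒜H β = str K 𝒜 f := by
  classical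
  have hfker : ∀ v ∈ LinearMap.ker d, f v ∈ LinearMap.ker d := by
    intro v hv
    rw [LinearMap.mem_ker] at hv ⊢
    rw [hcomm, hv, map_zero]
  have hBf : ∀ i : ℤ, ∀ v ∈ 𝒜 i ⊓ LinearMap.range d, f v ∈ 𝒜 i ⊓ LinearMap.range d := by
    rintro i v ⟨hv1, w, rfl⟩
    exact ⟨hfdeg i _ hv1, ⟨f w, hcomm w⟩⟩
  have hβdeg : ∀ i : ℤ, ∀ u ∈ 𝒜H i, β u ∈ 𝒜H i := by
    intro i u hu
    rw [h𝒜H i] at hu ⊢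
    obtain ⟨w, hw, rfl⟩ := hu
    refine ⟨⟨f w.1, hfker _ w.2⟩, ⟨hfdeg i _ hw.1, hfker _ w.2⟩, ?_⟩
    rw [Submodule.mkQ_apply, Submodule.mkQ_apply]
    exact (hβ w.1 w.2 (hfker _ w.2)).symm
  -- key identity
  have key : ∀ i : ℤ,
      LinearMap.trace K (𝒜 i) (gradedPiece 𝒜 f i) =
        LinearMap.trace K (𝒜H i) (gradedPiece 𝒜H β i) +
          (LinearMap.trace K (𝒜 i ⊓ LinearMap.range d : Submodule K E) (f.restrict (hBf i)) +
            LinearMap.trace K (𝒜 (i+1) ⊓ LinearMap.range d : Submodule K E)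
              (f.restrict (hBf (i+1)))) := by
    intro i
    have hmemA : ∀ v : ↥(𝒜 i),
        (d ∘ₗ (𝒜 i).subtype) v ∈ (𝒜 (i+1) ⊓ LinearMap.range d : Submodule K E) :=
      fun v => ⟨hddeg i _ v.2, ⟨v, rfl⟩⟩
    set πA : ↥(𝒜 i) →ₗ[K] ↥(𝒜 (i+1) ⊓ LinearMap.range d : Submodule K E) :=
      LinearMap.codRestrict _ (d ∘ₗ (𝒜 i).subtype) hmemA with hπA
    have hsurjA : Function.Surjective πA := by
      rintro ⟨y, hy1, w, rfl⟩
      refine ⟨⟨(DirectSum.decompose 𝒜 w i : E), SetLike.coe_mem _⟩, ?_⟩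
      apply Subtype.ext
      exact d_decompose_eq 𝒜 d hddeg i w hy1
    set fE := f.restrict (hfdeg i) with hfE
    have hkerA : ∀ v : ↥(𝒜 i), v ∈ LinearMap.ker πA ↔ d v.1 = 0 := by
      intro v
      rw [LinearMap.mem_ker]
      constructor
      · intro hv; exact congrArg Subtype.val hv
      · intro hv; exact Subtype.ext hv
    have hfkerA : ∀ v ∈ LinearMap.ker πA, fE v ∈ LinearMap.ker πA := by
      intro v hv
      rw [hkerA] at hv ⊢
      show d (f v.1) = 0
      rw [hcomm, hv, map_zero]
    have hcommA : ∀ v, πA (fE v) = (f.restrict (hBf (i+1))) (πA v) := by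
      intro v
      apply Subtype.ext
      exact hcomm v.1
    have stepA := auxTrace_eq_restrict_add_of_surjective fE (f.restrict (hBf (i+1))) πA
      hsurjA hfkerA hcommA
    -- stage B
    set fE' := fE.restrict hfkerA with hfE'
    have hmemKer : ∀ z : ↥(LinearMap.ker πA), (z.1.1 : E) ∈ LinearMap.ker d := by
      intro z
      rw [LinearMap.mem_ker]
      exact (hkerA z.1).mp z.2
    set ιB : ↥(LinearMap.ker πA) →ₗ[K] ↥(LinearMap.ker d) :=
      LinearMap.codRestrict (LinearMap.ker d) ((𝒜 i).subtype ∘ₗ (LinearMap.ker πA).subtype)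
        hmemKer with hιB
    have hmemB : ∀ z : ↥(LinearMap.ker πA),
        (((LinearMap.range d).comap (LinearMap.ker d).subtype).mkQ ∘ₗ ιB) z ∈ 𝒜H i := by
      intro z
      rw [h𝒜H i]
      exact ⟨ιB z, ⟨z.1.2, (hkerA z.1).mp z.2⟩, rfl⟩
    set πB : ↥(LinearMap.ker πA) →ₗ[K] ↥(𝒜H i) :=
      LinearMap.codRestrict (𝒜H i)
        (((LinearMap.range d).comap (LinearMap.ker d).subtype).mkQ ∘ₗ ιB) hmemB with hπB
    have hsurjB : Function.Surjective πB := by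
      rintro ⟨u, hu⟩
      rw [h𝒜H i] at hu
      obtain ⟨w, hw, hmk⟩ := hu
      have hv1 : (⟨w.1, hw.1⟩ : ↥(𝒜 i)) ∈ LinearMap.ker πA := by
        rw [hkerA]; exact w.2
      refine ⟨⟨⟨w.1, hw.1⟩, hv1⟩, ?_⟩
      apply Subtype.ext
      show ((LinearMap.range d).comap (LinearMap.ker d).subtype).mkQ ⟨w.1, _⟩ = u
      rw [← hmk]
    have hkerB : ∀ z : ↥(LinearMap.ker πA),
        z ∈ LinearMap.ker πB ↔ (z.1.1 : E) ∈ LinearMap.range d := by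
      intro z
      rw [LinearMap.mem_ker]
      constructor
      · intro hz
        have h0 : ((LinearMap.range d).comap (LinearMap.ker d).subtype).mkQ (ιB z) = 0 :=
          congrArg Subtype.val hz
        rw [Submodule.mkQ_apply, Submodule.Quotient.mk_eq_zero] at h0
        exact h0
      · intro hz
        apply Subtype.ext
        show ((LinearMap.range d).comap (LinearMap.ker d).subtype).mkQ (ιB z) = 0
        rw [Submodule.mkQ_apply, Submodule.Quotient.mk_eq_zero]
        exact hz
    have hfkerB : ∀ z ∈ LinearMap.ker πB, fE' z ∈ LinearMap.ker πB := by
      intro z hz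
      rw [hkerB] at hz ⊢
      obtain ⟨w, hw⟩ := hz
      refine ⟨f w, ?_⟩
      show d (f w) = _
      rw [hcomm, hw]
      rfl
    have hcommB : ∀ z, πB (fE' z) = (β.restrict (hβdeg i)) (πB z) := by
      intro z
      apply Subtype.ext
      show Submodule.Quotient.mk ⟨f z.1.1, _⟩ = β (Submodule.Quotient.mk (ιB z))
      exact (hβ z.1.1 (hmemKer z) (hfker _ (hmemKer z))).symm
    have stepB := auxTrace_eq_restrict_add_of_surjective fE' (β.restrict (hβdeg i)) πB
      hsurjB hfkerB hcommB
    -- leftover piece ≅ B i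
    have hmemC : ∀ z : ↥(LinearMap.ker πB),
        ((𝒜 i).subtype ∘ₗ ((LinearMap.ker πA).subtype ∘ₗ (LinearMap.ker πB).subtype)) z
          ∈ (𝒜 i ⊓ LinearMap.range d : Submodule K E) := by
      intro z
      exact ⟨z.1.1.2, (hkerB z.1).mp z.2⟩
    set φ : ↥(LinearMap.ker πB) →ₗ[K] ↥(𝒜 i ⊓ LinearMap.range d : Submodule K E) :=
      LinearMap.codRestrict _ ((𝒜 i).subtype ∘ₗ ((LinearMap.ker πA).subtype ∘ₗ
        (LinearMap.ker πB).subtype)) hmemC with hφ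
    have hinjφ : Function.Injective φ := by
      intro z z' hzz
      have h0 := congrArg Subtype.val hzz
      exact Subtype.ext (Subtype.ext (Subtype.ext h0))
    have hsurjφ : Function.Surjective φ := by
      rintro ⟨y, hy⟩
      have hyd : d y = 0 := by
        obtain ⟨w, hw⟩ := hy.2
        rw [← hw]
        exact hd2 w
      have h1 : (⟨y, hy.1⟩ : ↥(𝒜 i)) ∈ LinearMap.ker πA := by
        rw [hkerA]; exact hyd
      have h2 : (⟨⟨y, hy.1⟩, h1⟩ : ↥(LinearMap.ker πA)) ∈ LinearMap.ker πB := by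
        rw [hkerB]; exact hy.2
      exact ⟨⟨⟨⟨y, hy.1⟩, h1⟩, h2⟩, rfl⟩
    have stepC : LinearMap.trace K (LinearMap.ker πB) (fE'.restrict hfkerB) =
        LinearMap.trace K (𝒜 i ⊓ LinearMap.range d : Submodule K E) (f.restrict (hBf i)) := by
      exact auxTrace_eq_of_intertwine (K := K) (V := ↥(LinearMap.ker πB))
        (W := ↥(𝒜 i ⊓ LinearMap.range d : Submodule K E))
        (LinearEquiv.ofBijective φ ⟨hinjφ, hsurjφ⟩)
        (fE'.restrict hfkerB) (f.restrict (hBf i)) (fun z => Subtype.ext rfl)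
    have hai : LinearMap.trace K (𝒜 i) (gradedPiece 𝒜 f i) = LinearMap.trace K (𝒜 i) fE :=
      congrArg _ (gradedPiece_eq_restrict 𝒜 f i (hfdeg i))
    have hhi : LinearMap.trace K (𝒜H i) (gradedPiece 𝒜H β i) =
        LinearMap.trace K (𝒜H i) (β.restrict (hβdeg i)) :=
      congrArg _ (gradedPiece_eq_restrict 𝒜H β i (hβdeg i))
    rw [hai, stepA, stepB, stepC, hhi]
    ring
  -- summation phase
  have hfin : {i : ℤ | 𝒜 i ≠ ⊥}.Finite :=
    Submodule.finite_ne_bot_of_iSupIndep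
      (DirectSum.IsInternal.submodule_iSupIndep (DirectSum.Decomposition.isInternal 𝒜))
  have hbotH : ∀ i : ℤ, 𝒜 i = ⊥ → 𝒜H i = ⊥ := by
    intro i hi
    rw [h𝒜H i]
    have h1 : 𝒜 i ⊓ LinearMap.ker d = ⊥ := by rw [hi, bot_inf_eq]
    rw [h1]
    have h2 : (⊥ : Submodule K E).comap (LinearMap.ker d).subtype = ⊥ := by
      rw [Submodule.comap_bot, Submodule.ker_subtype]
    rw [h2, Submodule.map_bot]
  set a : ℤ → K := fun i => (-1 : K) ^ i * LinearMap.trace K (𝒜 i) (gradedPiece 𝒜 f i) with ha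
  set h : ℤ → K := fun i => (-1 : K) ^ i * LinearMap.trace K (𝒜H i) (gradedPiece 𝒜H β i) with hh
  set b : ℤ → K := fun i => (-1 : K) ^ i *
    LinearMap.trace K (𝒜 i ⊓ LinearMap.range d : Submodule K E) (f.restrict (hBf i)) with hb
  have hza : ∀ i, 𝒜 i = ⊥ → a i = 0 := by
    intro i hi
    haveI := aux_subsingleton_of_eq_bot (𝒜 i) hi
    show (-1 : K) ^ i * LinearMap.trace K (𝒜 i) (gradedPiece 𝒜 f i) = 0
    rw [auxTrace_zero_of_subsingleton, mul_zero]
  have hzh : ∀ i, 𝒜 i = ⊥ → h i = 0 := by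
    intro i hi
    haveI := aux_subsingleton_of_eq_bot (𝒜H i) (hbotH i hi)
    show (-1 : K) ^ i * LinearMap.trace K (𝒜H i) (gradedPiece 𝒜H β i) = 0
    rw [auxTrace_zero_of_subsingleton, mul_zero]
  have hzb : ∀ i, 𝒜 i = ⊥ → b i = 0 := by
    intro i hi
    haveI := aux_subsingleton_of_eq_bot (𝒜 i ⊓ LinearMap.range d)
      (le_bot_iff.mp (hi ▸ inf_le_left))
    show (-1 : K) ^ i * LinearMap.trace K (𝒜 i ⊓ LinearMap.range d : Submodule K E)
      (f.restrict (hBf i)) = 0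
    rw [auxTrace_zero_of_subsingleton, mul_zero]
  have hsub : ∀ (g : ℤ → K), (∀ i, 𝒜 i = ⊥ → g i = 0) → (Function.support g).Finite := by
    intro g hg
    apply hfin.subset
    intro i hi
    by_contra hbot
    simp only [Set.mem_setOf_eq, not_not] at hbot
    exact (Function.mem_support.mp hi) (hg i hbot)
  have hsa := hsub a hza
  have hsh := hsub h hzh
  have hsb := hsub b hzb
  have hsb' : (Function.support (fun i : ℤ => b (i + 1))).Finite := by
    apply (hsb.image (fun i : ℤ => i - 1)).subset
    intro i hi
    exact ⟨i + 1, hi, by ring⟩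
  have hm1 : (-1 : K) ≠ 0 := by norm_num
  have hstep : ∀ i : ℤ, a i = h i + (b i - b (i + 1)) := by
    intro i
    show (-1 : K) ^ i * LinearMap.trace K (𝒜 i) (gradedPiece 𝒜 f i) = _
    rw [key i]
    show _ = (-1 : K) ^ i * _ + ((-1 : K) ^ i * _ - (-1 : K) ^ (i + 1) * _)
    rw [zpow_add_one₀ hm1]
    ring
  have e1 : ∑ᶠ i : ℤ, a i = (∑ᶠ i : ℤ, h i) + ∑ᶠ i : ℤ, (b i - b (i + 1)) := by
    have hsubset : Function.support (fun i : ℤ => b i - b (i + 1)) ⊆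
        Function.support b ∪ Function.support (fun i : ℤ => b (i + 1)) := by
      intro i hi
      by_contra hc
      simp only [Set.mem_union, Function.mem_support, not_or, not_not] at hc
      refine (Function.mem_support.mp hi) ?_
      show b i - b (i + 1) = 0
      rw [hc.1, hc.2, sub_zero]
    rw [← finsum_add_distrib hsh ((hsb.union hsb').subset hsubset)]
    exact finsum_congr hstep
  have e2 : ∑ᶠ i : ℤ, (b i - b (i + 1)) = 0 := by
    rw [finsum_sub_distrib hsb hsb', sub_eq_zero]
    have h3 := finsum_comp_equiv (Equiv.addRight (1 : ℤ)) (f := b)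
    rw [← h3]
    exact finsum_congr (fun i => rfl)
  show (∑ᶠ i : ℤ, h i) = ∑ᶠ i : ℤ, a i
  rw [e1, e2, add_zero]

end AuxA

section AuxB
variable {K : Type*} [Field K] {E W : Type*} [AddCommGroup E] [Module K E]
    [AddCommGroup W] [Module K W]
    (l : ∀ n : ℕ, MultilinearMap K (fun _ : Fin n => E) E)
    (Φ : ∀ n : ℕ, MultilinearMap K (fun _ : Fin n => E) W)

lemma koszulSign_one {n : ℕ} (d : Fin n → ℤ) : koszulSign K 1 d = 1 := by
  unfold koszulSign
  rw [Finset.filter_false_of_mem, Finset.prod_empty]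
  intro p _ hp
  simp only [Equiv.Perm.one_apply] at hp
  exact absurd hp.2 (not_lt.mpr (le_of_lt hp.1))

lemma koszulSign_swap (d : Fin 2 → ℤ) :
    koszulSign K (Equiv.swap 0 1) d = (-1 : K) ^ (d 1 * d 0) := by
  unfold koszulSign
  have hfilt : (Finset.univ.filter (fun p : Fin 2 × Fin 2 =>
      p.1 < p.2 ∧ (Equiv.swap 0 1) p.2 < (Equiv.swap 0 1) p.1)) =
      {((0 : Fin 2), (1 : Fin 2))} := by decide
  rw [hfilt, Finset.prod_singleton]
  rw [Equiv.swap_apply_left, Equiv.swap_apply_right]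

lemma nested_one (σ : Equiv.Perm (Fin 1)) (w : Fin 1 → E) :
    nestedTerm l Φ 1 0 σ w = Φ 1 ![l 1 ![w (σ 0)]] := by
  show Φ 1 (Fin.cons (l 1 (fun a : Fin 1 => w (σ (Fin.castLE (by omega) a))))
      (fun a : Fin 0 => w (σ ⟨1 + a.1, by omega⟩))) = Φ 1 ![l 1 ![w (σ 0)]]
  refine congrArg _ (funext fun b => ?_)
  have hb : b = 0 := Fin.fin_one_eq_zero b
  subst hb
  rw [Fin.cons_zero, Matrix.cons_val_fin_one]
  refine congrArg _ (funext fun a => ?_)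
  rw [Matrix.cons_val_fin_one]
  have ha : a = 0 := Fin.fin_one_eq_zero a
  subst ha
  rfl

lemma nested_two_zero (σ : Equiv.Perm (Fin 2)) (w : Fin 2 → E) :
    nestedTerm l Φ 2 0 σ w = Φ 2 ![l 1 ![w (σ 0)], w (σ 1)] := by
  show Φ 2 (Fin.cons (l 1 (fun a : Fin 1 => w (σ (Fin.castLE (by omega) a))))
      (fun a : Fin 1 => w (σ ⟨1 + a.1, by omega⟩))) = _
  refine congrArg _ (funext fun b => ?_)
  refine Fin.cases ?_ (fun a => ?_) b
  · rw [Fin.cons_zero, Matrix.cons_val_zero]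
    refine congrArg _ (funext fun a => ?_)
    rw [Matrix.cons_val_fin_one]
    have ha : a = 0 := Fin.fin_one_eq_zero a
    subst ha
    rfl
  · rw [Fin.cons_succ]
    have ha : a = 0 := Fin.fin_one_eq_zero a
    subst ha
    show w (σ ⟨1 + 0, _⟩) = ![l 1 ![w (σ 0)], w (σ 1)] 1
    rw [Matrix.cons_val_one]
    rfl

lemma nested_two_one (σ : Equiv.Perm (Fin 2)) (w : Fin 2 → E) :
    nestedTerm l Φ 2 1 σ w = Φ 1 ![l 2 (fun a => w (σ a))] := by
  show Φ 1 (Fin.cons (l 2 (fun a : Fin 2 => w (σ (Fin.castLE (by omega) a))))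
      (fun a : Fin 0 => w (σ ⟨2 + a.1, by omega⟩))) = _
  refine congrArg _ (funext fun b => ?_)
  have hb : b = 0 := Fin.fin_one_eq_zero b
  subst hb
  rw [Fin.cons_zero, Matrix.cons_val_fin_one]
  refine congrArg _ (funext fun a => rfl)


lemma sum_filter_perm_one {M : Type*} [AddCommMonoid M] (P : Equiv.Perm (Fin 1) → Prop)
    [DecidablePred P] (g : Equiv.Perm (Fin 1) → M) :
    ∑ σ ∈ Finset.univ.filter P, g σ = if P 1 then g 1 else 0 := by
  have huniv : (Finset.univ : Finset (Equiv.Perm (Fin 1))) = {1} := by decide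
  rw [Finset.sum_filter, huniv, Finset.sum_singleton]

lemma sum_filter_perm_two {M : Type*} [AddCommMonoid M] (P : Equiv.Perm (Fin 2) → Prop)
    [DecidablePred P] (g : Equiv.Perm (Fin 2) → M) :
    ∑ σ ∈ Finset.univ.filter P, g σ =
      (if P 1 then g 1 else 0) +
        (if P (Equiv.swap 0 1) then g (Equiv.swap 0 1) else 0) := by
  have huniv : (Finset.univ : Finset (Equiv.Perm (Fin 2))) = {1, Equiv.swap 0 1} := by decide
  rw [Finset.sum_filter, huniv, Finset.sum_insert (by decide), Finset.sum_singleton]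

end AuxB


/-- for a finite-dimensional Lie `∞`-algebra `E`, the modular
function of the graded Lie algebra `H•(E, l₁)` agrees with the modular function of
`E` on degree `-1` cocycles: `ω_{H(E,l₁)}([x]) = ω_E(x)` for `x ∈ E_{-1}` with
`l₁ x = 0`.  Here `H = ker l₁ / im l₁` carries the grading `𝒜H` induced by `𝒜`,
`β` is the endomorphism of `H` induced by `ad_x = l₂(x, -)` (which is a chain
map), and both sides are supertraces of adjoint actions. -/
theorem stmt10 (K : Type) [Field K] [CharZero K] (E : Type) [AddCommGroup E] [Module K E]
    [FiniteDimensional K E] (𝒜 : ℤ → Submodule K E) [DirectSum.Decomposition 𝒜]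
    (L : GradedLieInfty K E 𝒜)
    (x : E) (hx : x ∈ 𝒜 (-1))
    (l1 : E →ₗ[K] E) (hl1 : ∀ e : E, l1 e = L.l 1 ![e])
    (hx1 : l1 x = 0)
    (adx : E →ₗ[K] E) (hadx : ∀ e : E, adx e = L.l 2 ![x, e])
    (𝒜H : ℤ → Submodule K
      ((LinearMap.ker l1) ⧸ ((LinearMap.range l1).comap (LinearMap.ker l1).subtype)))
    (h𝒜H : ∀ i : ℤ, 𝒜H i =
      (((𝒜 i ⊓ LinearMap.ker l1).comap (LinearMap.ker l1).subtype).map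
        ((LinearMap.range l1).comap (LinearMap.ker l1).subtype).mkQ))
    [DirectSum.Decomposition 𝒜H]
    (β : ((LinearMap.ker l1) ⧸ ((LinearMap.range l1).comap (LinearMap.ker l1).subtype)) →ₗ[K]
      ((LinearMap.ker l1) ⧸ ((LinearMap.range l1).comap (LinearMap.ker l1).subtype)))
    (hβ : ∀ (y : E) (hy : y ∈ LinearMap.ker l1) (hy' : adx y ∈ LinearMap.ker l1),
      β (Submodule.Quotient.mk ⟨y, hy⟩) = Submodule.Quotient.mk ⟨adx y, hy'⟩) :
    str K 𝒜H β = str K 𝒜 adx := by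
  classical
  have hm1 : (-1 : K) ≠ 0 := by norm_num
  -- degree of l1
  have hddeg : ∀ i : ℤ, ∀ v ∈ 𝒜 i, l1 v ∈ 𝒜 (i + 1) := by
    intro i v hv
    have hmem : ∀ a : Fin 1, (![v] : Fin 1 → E) a ∈ 𝒜 ((fun _ : Fin 1 => i) a) := by
      intro a; rw [Matrix.cons_val_fin_one]; exact hv
    have hthis := L.deg 1 le_rfl (fun _ => i) ![v] hmem
    have hsum : (∑ _a : Fin 1, i) + 1 = i + 1 := by rw [Fin.sum_univ_one]
    rw [hsum] at hthis
    rw [hl1 v]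
    exact hthis
  -- degree of adx
  have hfdeg : ∀ i : ℤ, ∀ v ∈ 𝒜 i, adx v ∈ 𝒜 i := by
    intro i v hv
    have hmem : ∀ a : Fin 2, (![x, v] : Fin 2 → E) a ∈ 𝒜 ((![-1, i] : Fin 2 → ℤ) a) := by
      intro a
      refine Fin.cases ?_ (fun a' => ?_) a
      · simpa using hx
      · have ha' : a' = 0 := Fin.fin_one_eq_zero a'
        subst ha'
        simpa using hv
    have hthis := L.deg 2 (by norm_num) ![-1, i] ![x, v] hmem
    have hsum : (∑ a : Fin 2, (![-1, i] : Fin 2 → ℤ) a) + 1 = i := by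
      rw [Fin.sum_univ_two]
      simp only [Matrix.cons_val_zero, Matrix.cons_val_one, Matrix.head_cons]
      ring
    rw [hsum] at hthis
    rw [hadx v]
    exact hthis
  -- d² = 0 on homogeneous elements
  have hd2h : ∀ (j : ℤ) (v : E), v ∈ 𝒜 j → l1 (l1 v) = 0 := by
    intro j v hv
    have hmem : ∀ a : Fin 1, (![v] : Fin 1 → E) a ∈ 𝒜 ((fun _ : Fin 1 => j) a) := by
      intro a; rw [Matrix.cons_val_fin_one]; exact hv
    have hjac := L.jacobi 1 le_rfl (fun _ => j) ![v] hmem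
    rw [Fin.sum_univ_one, sum_filter_perm_one, if_pos (by decide)] at hjac
    rw [koszulSign_one, one_smul, nested_one] at hjac
    simp only [Equiv.Perm.one_apply, Matrix.cons_val_fin_one] at hjac
    rw [hl1 (l1 v), hl1 v]
    exact hjac
  -- chain map identity on homogeneous elements
  have hcommh : ∀ (j : ℤ) (e : E), e ∈ 𝒜 j → l1 (adx e) = adx (l1 e) := by
    intro j e he
    have hde : l1 e ∈ 𝒜 (j + 1) := hddeg j e he
    have hmem : ∀ a : Fin 2, (![x, e] : Fin 2 → E) a ∈ 𝒜 ((![-1, j] : Fin 2 → ℤ) a) := by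
      intro a
      refine Fin.cases ?_ (fun a' => ?_) a
      · simpa using hx
      · have ha' : a' = 0 := Fin.fin_one_eq_zero a'
        subst ha'
        simpa using he
    have hjac := L.jacobi 2 (by norm_num) ![-1, j] ![x, e] hmem
    rw [Fin.sum_univ_two, sum_filter_perm_two, sum_filter_perm_two] at hjac
    have u1 : IsUnshuffle ((0 : Fin 2).val + 1) (1 : Equiv.Perm (Fin 2)) := by decide
    have u2 : IsUnshuffle ((0 : Fin 2).val + 1) (Equiv.swap (0 : Fin 2) 1) := by decide
    have u3 : IsUnshuffle ((1 : Fin 2).val + 1) (1 : Equiv.Perm (Fin 2)) := by decide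
    have u4 : ¬ IsUnshuffle ((1 : Fin 2).val + 1) (Equiv.swap (0 : Fin 2) 1) := by decide
    rw [if_pos u1, if_pos u2, if_pos u3, if_neg u4, add_zero] at hjac
    rw [koszulSign_one, one_smul, one_smul, koszulSign_swap] at hjac
    rw [nested_two_zero, nested_two_zero, nested_two_one] at hjac
    simp only [Equiv.Perm.one_apply, Equiv.swap_apply_left, Equiv.swap_apply_right,
      Matrix.cons_val_zero, Matrix.cons_val_one, Matrix.head_cons] at hjac
    rw [← hl1 x, hx1] at hjac
    have hz : (L.l 2) ![(0 : E), e] = 0 :=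
      (L.l 2).map_coord_zero (m := ![(0 : E), e]) 0 (by simp)
    rw [hz, zero_add] at hjac
    -- symmetry
    have hmem2 : ∀ a : Fin 2, (![l1 e, x] : Fin 2 → E) a ∈ 𝒜 ((![j+1, -1] : Fin 2 → ℤ) a) := by
      intro a
      refine Fin.cases ?_ (fun a' => ?_) a
      · simpa using hde
      · have ha' : a' = 0 := Fin.fin_one_eq_zero a'
        subst ha'
        simpa using hx
    have hsymm := L.symm 2 (by norm_num) (Equiv.swap 0 1) ![j+1, -1] ![l1 e, x] hmem2
    have harg : (fun a => (![l1 e, x] : Fin 2 → E) ((Equiv.swap 0 1) a)) = ![x, l1 e] := by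
      funext a
      refine Fin.cases ?_ (fun a' => ?_) a
      · simp [Equiv.swap_apply_left]
      · have ha' : a' = 0 := Fin.fin_one_eq_zero a'
        subst ha'
        simp [Equiv.swap_apply_right]
    rw [harg, koszulSign_swap] at hsymm
    simp only [Matrix.cons_val_zero, Matrix.cons_val_one, Matrix.head_cons] at hsymm hjac
    rw [← hl1 e] at hjac
    rw [show ((L.l 2) fun a => (![x, e] : Fin 2 → E) a) = (L.l 2) ![x, e] from rfl] at hjac
    -- combine
    have hB : (L.l 1) ![(L.l 2) ![x, e]] =
        -((-1 : K) ^ (j * (-1)) • (L.l 2) ![l1 e, x]) :=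
      eq_neg_of_add_eq_zero_right hjac
    have hs : -((-1 : K) ^ (j * (-1))) = (-1 : K) ^ ((-1) * (j + 1)) := by
      rw [show (-1 : ℤ) * (j + 1) = j * (-1) + (-1) by ring, zpow_add₀ hm1]
      rw [show ((-1 : ℤ) : ℤ) = -(1 : ℤ) from rfl, zpow_neg, zpow_one]
      rw [show ((-1 : K))⁻¹ = -1 by norm_num]
      ring
    rw [hadx e, hadx (l1 e), hl1 ((L.l 2) ![x, e]), hsymm, hB, ← neg_smul, hs]
  -- globalize
  have hd2 : ∀ v : E, l1 (l1 v) = 0 := by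
    intro v
    conv_lhs => rw [← DirectSum.sum_support_decompose 𝒜 v]
    rw [map_sum, map_sum]
    exact Finset.sum_eq_zero fun j _ => hd2h j _ (SetLike.coe_mem _)
  have hcomm : ∀ v : E, l1 (adx v) = adx (l1 v) := by
    intro v
    conv_lhs => rw [← DirectSum.sum_support_decompose 𝒜 v]
    conv_rhs => rw [← DirectSum.sum_support_decompose 𝒜 v]
    rw [map_sum, map_sum, map_sum, map_sum]
    exact Finset.sum_congr rfl fun j _ => hcommh j _ (SetLike.coe_mem _)
  exact str_eq_of_chainMap 𝒜 l1 adx hd2 hddeg hfdeg hcomm 𝒜H h𝒜H β hβ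


end
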